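/- Let (W,S) be a finite Coxeter system with longest element w₀, and I ⊆ S. If u ∈ W^I (a minimal right-coset representative) and v ∈ W_{w₀Iw₀} w₀ W_I, then u ≤_L v in the left weak order. -/

import Mathlib

open List CoxeterSystem

namespace StrongExch

variable {B W : Type*} [Group W] {M : CoxeterMatrix B} (cs : CoxeterSystem M W)

local prefix:100 "σ" => cs.simple
local prefix:100 "π" => cs.wordProd
local prefix:100 "ris" => cs.rightInvSeq
local prefix:100 "ℓ" => cs.length

open Classical in
/-- The function underlying the parity permutation for a generator. -/
noncomputable def sf (i : B) : W × ZMod 2 → W × ZMod 2 :=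
  fun p => (σ i * p.1 * σ i, p.2 + if p.1 = σ i then 1 else 0)

theorem sf_invol (i : B) : Function.Involutive (sf cs i) := by
  intro p
  obtain ⟨t, ε⟩ := p
  classical
  show (σ i * (σ i * t * σ i) * σ i,
    ε + (if t = σ i then 1 else 0) + (if σ i * t * σ i = σ i then 1 else 0)) = (t, ε)
  have h1 : σ i * (σ i * t * σ i) * σ i = t := by
    rw [← mul_assoc, ← mul_assoc, cs.simple_mul_simple_self, one_mul, mul_assoc,
      cs.simple_mul_simple_self, mul_one]
  have h2 : (σ i * t * σ i = σ i) ↔ (t = σ i) := by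
    constructor
    · intro h
      have := congrArg (fun z => σ i * z * σ i) h
      simpa [h1, ← mul_assoc, cs.simple_mul_simple_self] using this
    · intro h; rw [h]; rw [cs.simple_mul_simple_self, one_mul]
  simp only [h1, h2]
  rcases eq_or_ne t (σ i) with h | h
  · simp only [if_pos (h2.mpr h), if_pos h, add_assoc]
    have : (1 + 1 : ZMod 2) = 0 := rfl
    rw [this, add_zero]
  · have h' : ¬ (σ i * t = 1) := by
      intro hh
      exact h ((eq_inv_of_mul_eq_one_right hh).trans (cs.inv_simple i))
    simp only [if_neg (fun hh => h (h2.mp hh)), if_neg h, add_zero]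

/-- The parity permutation for a generator. -/
noncomputable def sp (i : B) : Equiv.Perm (W × ZMod 2) := (sf_invol cs i).toPerm

@[simp] theorem sp_apply (i : B) (p : W × ZMod 2) : sp cs i p = sf cs i p := rfl

open Classical in
theorem sp_mul_apply (i i' : B) (t : W) (ε : ZMod 2) :
    (sp cs i * sp cs i') (t, ε) =
      ((σ i * σ i') * t * (σ i * σ i')⁻¹,
        ε + ((if t = ((σ i * σ i') ^ 0)⁻¹ * σ i' then 1 else 0)
          + (if t = ((σ i * σ i') ^ 1)⁻¹ * σ i' then 1 else 0))) := by
  rw [Equiv.Perm.mul_apply]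
  simp only [sp_apply, sf]
  congr 1
  · rw [mul_inv_rev, cs.inv_simple, cs.inv_simple]
    group
  · have c1 : (t = σ i') ↔ (t = ((σ i * σ i') ^ 0)⁻¹ * σ i') := by
      rw [pow_zero, inv_one, one_mul]
    have c2 : (σ i' * t * σ i' = σ i) ↔ (t = ((σ i * σ i') ^ 1)⁻¹ * σ i') := by
      rw [pow_one, mul_inv_rev, cs.inv_simple, cs.inv_simple]
      constructor
      · intro h
        have h2 : σ i' * (σ i' * t * σ i') * σ i' = σ i' * σ i * σ i' := by rw [h]
        have h3 : σ i' * (σ i' * t * σ i') * σ i' = t := by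
          rw [← mul_assoc, ← mul_assoc, cs.simple_mul_simple_self, one_mul, mul_assoc,
            cs.simple_mul_simple_self, mul_one]
        rw [← h3, h2]
      · intro h
        rw [h]
        calc σ i' * (σ i' * σ i * σ i') * σ i'
            = (σ i' * σ i') * σ i * (σ i' * σ i') := by group
          _ = σ i := by rw [cs.simple_mul_simple_self, one_mul, mul_one]
    rw [c1, c2, add_assoc]

private theorem sum_shift (f : ℕ → ZMod 2) (n : ℕ) :
    f 0 + f 1 + ∑ k ∈ Finset.range (2 * n), f (k + 2)
      = ∑ k ∈ Finset.range (2 * (n + 1)), f k := by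
  rw [show 2 * (n + 1) = 2 * n + 1 + 1 by ring, Finset.sum_range_succ', Finset.sum_range_succ']
  have h1 : ∀ k, f (k + 1 + 1) = f (k + 2) := fun k => rfl
  have h2 : f (0 + 1) = f 1 := rfl
  simp only [h1, h2]
  ring

open Classical in
theorem sp_mul_pow_apply (i i' : B) (n : ℕ) (t : W) (ε : ZMod 2) :
    ((sp cs i * sp cs i') ^ n) (t, ε) =
      ((σ i * σ i') ^ n * t * ((σ i * σ i') ^ n)⁻¹,
        ε + ∑ k ∈ Finset.range (2 * n),
          if t = ((σ i * σ i') ^ k)⁻¹ * σ i' then 1 else 0) := by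
  induction n generalizing t ε with
  | zero => simp
  | succ n ih =>
    rw [pow_succ, Equiv.Perm.mul_apply, sp_mul_apply, ih]
    have key : σ i' * (σ i * σ i') = (σ i * σ i')⁻¹ * σ i' := by
      rw [mul_inv_rev, cs.inv_simple, cs.inv_simple, mul_assoc]
    generalize hP : σ i * σ i' = P at key ⊢
    congr 1
    · rw [pow_succ]; group
    · have c3 : ∀ k : ℕ, (P * t * P⁻¹ = (P ^ k)⁻¹ * σ i') ↔ (t = (P ^ (k + 2))⁻¹ * σ i') := by
        intro k
        constructor
        · intro h
          have ht : t = P⁻¹ * ((P ^ k)⁻¹ * σ i') * P := by rw [← h]; group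
          rw [ht]
          calc P⁻¹ * ((P ^ k)⁻¹ * σ i') * P
              = (P ^ k)⁻¹ * P⁻¹ * (σ i' * P) := by group
            _ = (P ^ k)⁻¹ * P⁻¹ * (P⁻¹ * σ i') := by rw [key]
            _ = (P ^ (k + 2))⁻¹ * σ i' := by
                rw [pow_add, pow_two, mul_inv_rev, mul_inv_rev]; group
        · intro h
          rw [h]
          have e1 : P⁻¹ * σ i' * P⁻¹ = σ i' := by rw [← key]; group
          calc P * ((P ^ (k + 2))⁻¹ * σ i') * P⁻¹
              = (P ^ k)⁻¹ * (P⁻¹ * σ i' * P⁻¹) := by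
                rw [pow_add, pow_two, mul_inv_rev, mul_inv_rev]; group
            _ = (P ^ k)⁻¹ * σ i' := by rw [e1]
      have hsum : ∑ k ∈ Finset.range (2 * n),
          (if P * t * P⁻¹ = (P ^ k)⁻¹ * σ i' then (1 : ZMod 2) else 0)
          = ∑ k ∈ Finset.range (2 * n),
            (if t = (P ^ (k + 2))⁻¹ * σ i' then (1 : ZMod 2) else 0) := by
        apply Finset.sum_congr rfl
        intro k _
        rw [if_congr (c3 k) rfl rfl]
      rw [hsum]
      show ε + ((fun k => if t = (P ^ k)⁻¹ * σ i' then (1 : ZMod 2) else 0) 0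
            + (fun k => if t = (P ^ k)⁻¹ * σ i' then (1 : ZMod 2) else 0) 1)
          + ∑ k ∈ Finset.range (2 * n),
              (fun k => if t = (P ^ k)⁻¹ * σ i' then (1 : ZMod 2) else 0) (k + 2)
        = ε + ∑ k ∈ Finset.range (2 * (n + 1)),
              (fun k => if t = (P ^ k)⁻¹ * σ i' then (1 : ZMod 2) else 0) k
      rw [← sum_shift (fun k => if t = (P ^ k)⁻¹ * σ i' then (1 : ZMod 2) else 0) n]
      ring


open Classical in
theorem sp_liftable : M.IsLiftable (fun i => sp cs i) := by
  intro i i'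
  apply Equiv.ext
  rintro ⟨t, ε⟩
  rw [show ((fun i => sp cs i) i * (fun i => sp cs i) i') = sp cs i * sp cs i' from rfl]
  rw [sp_mul_pow_apply]
  rw [Equiv.Perm.coe_one, id_eq]
  have hpow : (σ i * σ i') ^ M.M i i' = 1 := cs.simple_mul_simple_pow i i'
  congr 1
  · rw [hpow, one_mul, inv_one, mul_one]
  · have hper : ∀ k : ℕ, ((σ i * σ i') ^ (M.M i i' + k))⁻¹ * σ i'
        = ((σ i * σ i') ^ k)⁻¹ * σ i' := by
      intro k
      rw [pow_add, hpow, one_mul]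
    rw [show 2 * M.M i i' = M.M i i' + M.M i i' by ring, Finset.sum_range_add]
    have : ∀ k ∈ Finset.range (M.M i i'),
        (if t = ((σ i * σ i') ^ (M.M i i' + k))⁻¹ * σ i' then (1 : ZMod 2) else 0)
        = (if t = ((σ i * σ i') ^ k)⁻¹ * σ i' then (1 : ZMod 2) else 0) := by
      intro k _
      rw [hper k]
    rw [Finset.sum_congr rfl this]
    generalize (∑ k ∈ Finset.range (M.M i i'),
      if t = ((σ i * σ i') ^ k)⁻¹ * σ i' then (1 : ZMod 2) else 0) = S
    have hSS : ∀ S : ZMod 2, S + S = 0 := by decide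
    rw [hSS S, add_zero]

/-- The parity representation. -/
noncomputable def phi : W →* Equiv.Perm (W × ZMod 2) :=
  cs.lift ⟨fun i => sp cs i, sp_liftable cs⟩

theorem phi_simple (i : B) : phi cs (σ i) = sp cs i :=
  cs.lift_apply_simple (sp_liftable cs) i

open Classical in
theorem phi_wordProd (ω : List B) (t : W) (ε : ZMod 2) :
    phi cs (π ω) (t, ε) = (π ω * t * (π ω)⁻¹,
      ε + ((ris ω).countP (fun x => decide (x = t)) : ZMod 2)) := by
  induction ω generalizing ε with
  | nil => simp
  | cons i ω ih =>
    rw [cs.wordProd_cons, map_mul, Equiv.Perm.mul_apply, ih, phi_simple, sp_apply]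
    simp only [sf]
    have hris : cs.rightInvSeq (i :: ω) = ((π ω)⁻¹ * σ i * (π ω)) :: cs.rightInvSeq ω := rfl
    congr 1
    · rw [mul_inv_rev, cs.inv_simple]
      group
    · rw [hris, List.countP_cons]
      have hcond : (π ω * t * (π ω)⁻¹ = σ i) ↔ ((π ω)⁻¹ * σ i * π ω = t) := by
        constructor
        · intro h
          rw [← h]; group
        · intro h
          rw [← h]; group
      push_cast
      rcases Classical.em ((π ω)⁻¹ * σ i * π ω = t) with h | h
      · rw [if_pos (hcond.mpr h), if_pos (by simpa using h)]
        push_cast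
        ring
      · rw [if_neg (fun hh => h (hcond.mp hh)), if_neg (by simpa using h)]
        push_cast
        ring

/-- Parity of the number of times `t` occurs in a (right) inversion sequence of `w`. -/
noncomputable def eta (w t : W) : ZMod 2 := (phi cs w (t, 0)).2

open Classical in
theorem eta_wordProd (ω : List B) (t : W) :
    eta cs (π ω) t = ((ris ω).countP (fun x => decide (x = t)) : ZMod 2) := by
  rw [eta, phi_wordProd, zero_add]

theorem phi_apply (w t : W) (ε : ZMod 2) :
    phi cs w (t, ε) = (w * t * w⁻¹, ε + eta cs w t) := by
  obtain ⟨ω, rfl⟩ := cs.wordProd_surjective w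
  rw [phi_wordProd, eta_wordProd]

theorem eta_mul (w v t : W) :
    eta cs (w * v) t = eta cs v t + eta cs w (v * t * v⁻¹) := by
  have : phi cs (w * v) (t, 0) = phi cs w (phi cs v (t, 0)) := by
    rw [map_mul, Equiv.Perm.mul_apply]
  rw [eta, this, phi_apply, phi_apply, zero_add]

theorem eta_refl_self {t : W} (ht : cs.IsReflection t) : eta cs t t = 1 := by
  obtain ⟨x, i, rfl⟩ := ht
  set t := x * σ i * x⁻¹ with hta
  have hx : x⁻¹ * t * (x⁻¹)⁻¹ = σ i := by rw [hta]; group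
  have h1 : phi cs x⁻¹ (t, 0) = (σ i, eta cs x⁻¹ t) := by
    rw [phi_apply, hx, zero_add]
  have h2 : ∀ e : ZMod 2, phi cs (σ i) (σ i, e) = (σ i, e + 1) := by
    intro e
    rw [phi_simple, sp_apply]
    simp only [sf, if_pos rfl, if_true]
    rw [mul_assoc, cs.simple_mul_simple_self, mul_one]
  have h3 : ∀ e : ZMod 2, phi cs x (σ i, e) = (t, e + eta cs x (σ i)) := by
    intro e
    rw [phi_apply, hta]
  have hcancel : eta cs x⁻¹ t + eta cs x (σ i) = 0 := by
    have : phi cs x (phi cs x⁻¹ (t, 0)) = (t, 0) := by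
      rw [← Equiv.Perm.mul_apply, ← map_mul, mul_inv_cancel, map_one, Equiv.Perm.coe_one, id_eq]
    rw [h1, h3] at this
    exact congrArg Prod.snd this
  have : phi cs t (t, 0) = (t, eta cs x⁻¹ t + 1 + eta cs x (σ i)) := by
    have hdecomp : phi cs t = phi cs x * phi cs (σ i) * phi cs x⁻¹ := by
      rw [← map_mul, ← map_mul, hta]
    rw [hdecomp, Equiv.Perm.mul_apply, Equiv.Perm.mul_apply, h1, h2, h3]
  rw [eta, this]
  rw [show eta cs x⁻¹ t + 1 + eta cs x (σ i) = eta cs x⁻¹ t + eta cs x (σ i) + 1 by ring,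
    hcancel, zero_add]

open Classical in
theorem lt_of_eta_eq_one {w t : W} (ht : cs.IsReflection t) (h : eta cs w t = 1) :
    ℓ (w * t) < ℓ w := by
  obtain ⟨ω, hred, rfl⟩ := cs.exists_reduced_word' w
  rw [eta_wordProd] at h
  have hodd : Odd ((ris ω).countP (fun x => decide (x = t))) := ZMod.natCast_eq_one_iff_odd.mp h
  have hpos : 0 < (ris ω).countP (fun x => decide (x = t)) :=
    Nat.pos_of_ne_zero (by intro hz; rw [hz] at hodd; simp at hodd)
  obtain ⟨a, ha, hpa⟩ := List.countP_pos_iff.mp hpos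
  have : a = t := of_decide_eq_true hpa
  subst this
  exact (cs.isRightInversion_of_mem_rightInvSeq hred ha).2

theorem eta_eq_one_iff {w t : W} (ht : cs.IsReflection t) :
    eta cs w t = 1 ↔ ℓ (w * t) < ℓ w := by
  constructor
  · exact lt_of_eta_eq_one cs ht
  · intro hlt
    rcases (by decide : ∀ a : ZMod 2, a = 0 ∨ a = 1) (eta cs w t) with h0 | h1
    · exfalso
      have h1 : eta cs (w * t) t = 1 := by
        rw [eta_mul]
        have htt : t * t * t⁻¹ = t := by
          rw [ht.mul_self, one_mul, ht.inv]
        rw [htt, eta_refl_self cs ht, h0, add_zero]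
      have := lt_of_eta_eq_one cs ht h1
      rw [mul_assoc, ht.mul_self, mul_one] at this
      omega
    · exact h1

open Classical in
theorem mem_rightInvSeq_of_lt {ω : List B} {t : W} (ht : cs.IsReflection t)
    (hlt : ℓ (π ω * t) < ℓ (π ω)) : t ∈ ris ω := by
  have h1 : eta cs (π ω) t = 1 := (eta_eq_one_iff cs ht).mpr hlt
  rw [eta_wordProd] at h1
  have hodd : Odd ((ris ω).countP (fun x => decide (x = t))) := ZMod.natCast_eq_one_iff_odd.mp h1
  have hpos : 0 < (ris ω).countP (fun x => decide (x = t)) :=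
    Nat.pos_of_ne_zero (by intro hz; rw [hz] at hodd; simp at hodd)
  obtain ⟨a, ha, hpa⟩ := List.countP_pos_iff.mp hpos
  have : a = t := of_decide_eq_true hpa
  subst this
  exact ha

open Classical in
theorem mem_ris_toFinset_iff {ω : List B} (hω : cs.IsReduced ω) (t : W) :
    t ∈ (ris ω).toFinset ↔ cs.IsRightInversion (π ω) t := by
  rw [List.mem_toFinset]
  constructor
  · exact fun h => cs.isRightInversion_of_mem_rightInvSeq hω h
  · exact fun h => mem_rightInvSeq_of_lt cs h.1 h.2

open Classical in
theorem card_ris_toFinset {ω : List B} (hω : cs.IsReduced ω) :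
    (ris ω).toFinset.card = ℓ (π ω) := by
  rw [List.toFinset_card_of_nodup (hω.nodup_rightInvSeq), cs.length_rightInvSeq, hω]

theorem isRightInversion_iff_eta {w t : W} (ht : cs.IsReflection t) :
    cs.IsRightInversion w t ↔ eta cs w t = 1 := by
  rw [eta_eq_one_iff cs ht]
  exact ⟨fun h => h.2, fun h => ⟨ht, h⟩⟩

theorem eta_eq_zero_iff {w t : W} (ht : cs.IsReflection t) :
    eta cs w t = 0 ↔ ¬ cs.IsRightInversion w t := by
  rw [isRightInversion_iff_eta cs ht]
  rcases (by decide : ∀ a : ZMod 2, a = 0 ∨ a = 1) (eta cs w t) with h | h <;> rw [h] <;> simp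

section W0

variable {w₀ : W} (hw₀ : ∀ w : W, w ≠ w₀ → cs.length w < cs.length w₀)

include hw₀

theorem w0_inversion {t : W} (ht : cs.IsReflection t) : cs.IsRightInversion w₀ t := by
  refine ⟨ht, ?_⟩
  apply hw₀
  intro h
  exact ht.length_mul_left_ne w₀ (by rw [h])

theorem length_le_w0 (w : W) : ℓ w ≤ ℓ w₀ := by
  rcases eq_or_ne w w₀ with rfl | h
  · exact le_refl _
  · exact (hw₀ w h).le

theorem w0_mul_self : w₀ * w₀ = 1 := by
  have hinv : w₀⁻¹ = w₀ := by
    by_contra h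
    have := hw₀ w₀⁻¹ h
    rw [cs.length_inv] at this
    omega
  nth_rewrite 1 [← hinv]
  exact inv_mul_cancel w₀

open Classical in
theorem length_w0_mul (z : W) : ℓ (w₀ * z) + ℓ z = ℓ w₀ := by
  obtain ⟨ω₀, hred₀, hw0eq⟩ := cs.exists_reduced_word' w₀
  obtain ⟨ωz, hredz, hzeq⟩ := cs.exists_reduced_word' z
  obtain ⟨ω', hred', heq'⟩ := cs.exists_reduced_word' (w₀ * z)
  have hsub : (ris ωz).toFinset ⊆ (ris ω₀).toFinset := by
    intro t htmem
    have hrefl : cs.IsReflection t :=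
      cs.isReflection_of_mem_rightInvSeq ωz (List.mem_toFinset.mp htmem)
    rw [mem_ris_toFinset_iff cs hred₀, ← hw0eq]
    exact w0_inversion cs hw₀ hrefl
  have hset : (ris ω').toFinset = (ris ω₀).toFinset \ (ris ωz).toFinset := by
    ext t
    rw [Finset.mem_sdiff, mem_ris_toFinset_iff cs hred', mem_ris_toFinset_iff cs hred₀,
      mem_ris_toFinset_iff cs hredz, ← hw0eq, ← hzeq, ← heq']
    constructor
    · intro h
      have hrefl := h.1
      refine ⟨w0_inversion cs hw₀ hrefl, ?_⟩
      intro hzinv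
      rw [isRightInversion_iff_eta cs hrefl] at h hzinv
      rw [eta_mul] at h
      have hconj : cs.IsReflection (z * t * z⁻¹) := hrefl.conj z
      have : eta cs w₀ (z * t * z⁻¹) = 1 :=
        (isRightInversion_iff_eta cs hconj).mp (w0_inversion cs hw₀ hconj)
      rw [this, hzinv] at h
      simp at h
    · rintro ⟨hw0t, hnz⟩
      have hrefl := hw0t.1
      rw [isRightInversion_iff_eta cs hrefl]
      rw [eta_mul]
      have hconj : cs.IsReflection (z * t * z⁻¹) := hrefl.conj z
      have h1 : eta cs w₀ (z * t * z⁻¹) = 1 :=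
        (isRightInversion_iff_eta cs hconj).mp (w0_inversion cs hw₀ hconj)
      have h0 : eta cs z t = 0 := (eta_eq_zero_iff cs hrefl).mpr hnz
      rw [h1, h0, zero_add]
  have hcards := congrArg Finset.card hset
  rw [Finset.card_sdiff_of_subset hsub, card_ris_toFinset cs hred', card_ris_toFinset cs hred₀,
    card_ris_toFinset cs hredz, ← hw0eq, ← hzeq, ← heq'] at hcards
  have hle : ℓ z ≤ ℓ w₀ := length_le_w0 cs hw₀ z
  omega

end W0

section Parabolic

variable (I : Set B)

theorem wordProd_mem_closure {ω : List B} (hω : ∀ i ∈ ω, i ∈ I) :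
    π ω ∈ Subgroup.closure (cs.simple '' I) := by
  induction ω with
  | nil => rw [cs.wordProd_nil]; exact one_mem _
  | cons i ω ih =>
    rw [cs.wordProd_cons]
    exact mul_mem (Subgroup.subset_closure ⟨i, hω i (by simp), rfl⟩)
      (ih fun j hj => hω j (by simp [hj]))

theorem exists_Iword {x : W} (hx : x ∈ Subgroup.closure (cs.simple '' I)) :
    ∃ ω : List B, (∀ i ∈ ω, i ∈ I) ∧ π ω = x := by
  refine Subgroup.closure_induction ?_ ?_ ?_ ?_ hx
  · rintro g ⟨i, hi, rfl⟩
    exact ⟨[i], by simpa using hi, by simp⟩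
  · exact ⟨[], by simp, by simp⟩
  · rintro a b _ _ ⟨ωa, ha, rfl⟩ ⟨ωb, hb, rfl⟩
    refine ⟨ωa ++ ωb, ?_, by rw [cs.wordProd_append]⟩
    intro i hi
    rcases List.mem_append.mp hi with h | h
    exacts [ha i h, hb i h]
  · rintro a _ ⟨ω, hω, rfl⟩
    exact ⟨ω.reverse, fun i hi => hω i (List.mem_reverse.mp hi), by rw [cs.wordProd_reverse]⟩

theorem exists_reduced_Iword {x : W} (hx : x ∈ Subgroup.closure (cs.simple '' I)) :
    ∃ ω : List B, (∀ i ∈ ω, i ∈ I) ∧ cs.IsReduced ω ∧ π ω = x := by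
  obtain ⟨ω, hω, rfl⟩ := exists_Iword cs I hx
  clear hx
  suffices h : ∀ ω : List B, (∀ i ∈ ω, i ∈ I) →
      ∃ ω' : List B, (∀ i ∈ ω', i ∈ I) ∧ cs.IsReduced ω' ∧ π ω' = π ω from h ω hω
  clear hω ω
  intro ω
  induction ω using List.reverseRecOn with
  | nil => exact fun _ => ⟨[], by simp, by simp [CoxeterSystem.IsReduced], rfl⟩
  | append_singleton ω i ih =>
    intro hfull
    obtain ⟨ρ, hρI, hρred, hρeq⟩ := ih (fun j hj => hfull j (by simp [hj]))
    have hi : i ∈ I := hfull i (by simp)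
    have htarget : π (ω ++ [i]) = π ρ * σ i := by
      rw [cs.wordProd_append, cs.wordProd_singleton, hρeq]
    rcases cs.length_mul_simple (π ρ) i with hup | hdown
    · refine ⟨ρ ++ [i], ?_, ?_, ?_⟩
      · intro j hj
        rcases List.mem_append.mp hj with h | h
        · exact hρI j h
        · simp only [List.mem_singleton] at h
          exact h ▸ hi
      · show ℓ (π (ρ ++ [i])) = (ρ ++ [i]).length
        rw [cs.wordProd_append, cs.wordProd_singleton, hup]
        have : ℓ (π ρ) = ρ.length := hρred
        simp [this]
      · rw [cs.wordProd_append, cs.wordProd_singleton, htarget]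
    · have hlt : ℓ (π ρ * σ i) < ℓ (π ρ) := by omega
      have hmem : σ i ∈ ris ρ :=
        mem_rightInvSeq_of_lt cs (cs.isReflection_simple i) hlt
      obtain ⟨j, hj, hget⟩ := List.mem_iff_getElem.mp hmem
      have hjlen : j < ρ.length := by
        have := cs.length_rightInvSeq ρ
        omega
      have herase : π ρ * σ i = π (ρ.eraseIdx j) := by
        rw [← cs.wordProd_mul_getD_rightInvSeq ρ j]
        congr 1
        rw [List.getD_eq_getElem _ 1 hj, hget]
      refine ⟨ρ.eraseIdx j, ?_, ?_, ?_⟩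
      · intro k hk
        exact hρI k ((List.eraseIdx_sublist ρ j).subset hk)
      · show ℓ (π (ρ.eraseIdx j)) = (ρ.eraseIdx j).length
        rw [← herase]
        have h1 : (ρ.eraseIdx j).length + 1 = ρ.length := List.length_eraseIdx_add_one hjlen
        have h2 : ℓ (π ρ) = ρ.length := hρred
        have h3 : ℓ (π ρ) ≤ ℓ (π ρ * σ i) + 1 := by
          have := cs.length_mul_simple (π ρ) i
          omega
        omega
      · rw [htarget, herase]

/-- A reflection of the standard parabolic subgroup. -/
def IsIRefl (t : W) : Prop :=
  ∃ d ∈ Subgroup.closure (cs.simple '' I), ∃ j ∈ I, t = d * cs.simple j * d⁻¹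

theorem IsIRefl.isReflection {t : W} (h : IsIRefl cs I t) : cs.IsReflection t := by
  obtain ⟨d, _, j, _, rfl⟩ := h
  exact ⟨d, j, rfl⟩

theorem IsIRefl.mem_closure {t : W} (h : IsIRefl cs I t) :
    t ∈ Subgroup.closure (cs.simple '' I) := by
  obtain ⟨d, hd, j, hj, rfl⟩ := h
  exact mul_mem (mul_mem hd (Subgroup.subset_closure ⟨j, hj, rfl⟩)) (inv_mem hd)

theorem IsIRefl.conj {t x : W} (hx : x ∈ Subgroup.closure (cs.simple '' I))
    (h : IsIRefl cs I t) : IsIRefl cs I (x * t * x⁻¹) := by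
  obtain ⟨d, hd, j, hj, rfl⟩ := h
  exact ⟨x * d, mul_mem hx hd, j, hj, by group⟩

theorem ris_Iword_isIRefl {ω : List B} (hω : ∀ i ∈ ω, i ∈ I) :
    ∀ t ∈ ris ω, IsIRefl cs I t := by
  induction ω with
  | nil => simp
  | cons i ω ih =>
    intro t ht
    have hris : cs.rightInvSeq (i :: ω) = ((π ω)⁻¹ * σ i * (π ω)) :: cs.rightInvSeq ω := rfl
    rw [hris, List.mem_cons] at ht
    rcases ht with rfl | ht
    · refine ⟨(π ω)⁻¹, inv_mem (wordProd_mem_closure cs I fun j hj => hω j (by simp [hj])),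
        i, hω i (by simp), by group⟩
    · exact ih (fun j hj => hω j (by simp [hj])) t ht

end Parabolic

open Classical in
theorem length_mul_of_min {I : Set B} {u : W}
    (hu : ∀ j ∈ I, ℓ u < ℓ (u * cs.simple j)) :
    ∀ x ∈ Subgroup.closure (cs.simple '' I), ℓ (u * x) = ℓ u + ℓ x := by
  set K := Subgroup.closure (cs.simple '' I) with hK
  -- choose a minimal length element of the coset u * K
  set S : Set ℕ := {n | ∃ x ∈ K, ℓ (u * x) = n} with hS
  have hSne : S.Nonempty := ⟨ℓ u, 1, one_mem _, by rw [mul_one]⟩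
  obtain ⟨x₀, hx₀K, hx₀len⟩ := Nat.sInf_mem hSne
  set u₀ := u * x₀ with hu₀
  have hmin : ∀ x ∈ K, ℓ u₀ ≤ ℓ (u * x) := by
    intro x hx
    rw [hx₀len]
    exact Nat.sInf_le ⟨x, hx, rfl⟩
  -- no reflection of the parabolic subgroup is an inversion of u₀
  have h3a : ∀ t, IsIRefl cs I t → eta cs u₀ t = 0 := by
    intro t ht
    have htR := ht.isReflection
    have hmemK : t ∈ K := ht.mem_closure
    have hco : u₀ * t = u * (x₀ * t) := by rw [hu₀]; group
    have hge : ℓ u₀ ≤ ℓ (u₀ * t) := by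
      rw [hco]; exact hmin _ (mul_mem hx₀K hmemK)
    have hne : ℓ (u₀ * t) ≠ ℓ u₀ := htR.length_mul_left_ne u₀
    rw [eta_eq_zero_iff cs htR]
    intro hinv
    have := hinv.2
    omega
  -- lengths add for u₀
  have h3b : ∀ x ∈ K, ℓ (u₀ * x) = ℓ u₀ + ℓ x := by
    intro x hxK
    obtain ⟨ωx, hωxI, hωxred, hωxeq⟩ := exists_reduced_Iword cs I hxK
    obtain ⟨ω₀, hred₀, h0eq⟩ := cs.exists_reduced_word' u₀
    obtain ⟨ω', hred', heq'⟩ := cs.exists_reduced_word' (u₀ * x)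
    set A := (ris ωx).toFinset with hA
    set Bf := (ris ω₀).toFinset.image (fun t => x⁻¹ * t * x) with hB
    have hA_iff : ∀ t, t ∈ A ↔ cs.IsRightInversion x t := by
      intro t
      rw [hA, mem_ris_toFinset_iff cs hωxred, hωxeq]
    have hB_iff : ∀ t, t ∈ Bf ↔ cs.IsRightInversion u₀ (x * t * x⁻¹) := by
      intro t
      rw [hB]
      simp only [Finset.mem_image]
      constructor
      · rintro ⟨t', ht', rfl⟩
        have hc : x * (x⁻¹ * t' * x) * x⁻¹ = t' := by group
        rw [hc]
        rw [mem_ris_toFinset_iff cs hred₀, ← h0eq] at ht'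
        exact ht'
      · intro h
        refine ⟨x * t * x⁻¹, ?_, by group⟩
        rw [mem_ris_toFinset_iff cs hred₀, ← h0eq]
        exact h
    have hAIrefl : ∀ t ∈ A, IsIRefl cs I t := by
      intro t ht
      exact ris_Iword_isIRefl cs I hωxI t (List.mem_toFinset.mp ht)
    have hdisj_aux : ∀ t, t ∈ A → t ∉ Bf := by
      intro t htA htB
      have hIr : IsIRefl cs I (x * t * x⁻¹) := (hAIrefl t htA).conj cs I hxK
      have h0 := h3a _ hIr
      rw [eta_eq_zero_iff cs hIr.isReflection] at h0
      exact h0 ((hB_iff t).mp htB)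
    have hset : (ris ω').toFinset = A ∪ Bf := by
      ext t
      rw [Finset.mem_union, mem_ris_toFinset_iff cs hred', ← heq']
      constructor
      · intro h
        have htR := h.1
        have hconjR : cs.IsReflection (x * t * x⁻¹) := htR.conj x
        rw [isRightInversion_iff_eta cs htR, eta_mul] at h
        rcases (by decide : ∀ a : ZMod 2, a = 0 ∨ a = 1) (eta cs x t) with h0 | h1
        · right
          rw [h0, zero_add] at h
          exact (hB_iff t).mpr ((isRightInversion_iff_eta cs hconjR).mpr h)
        · left
          exact (hA_iff t).mpr ((isRightInversion_iff_eta cs htR).mpr h1)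
      · intro h
        rcases h with htA | htB
        · have hIr := hAIrefl t htA
          have htR := hIr.isReflection
          have hconjR : cs.IsReflection (x * t * x⁻¹) := htR.conj x
          rw [isRightInversion_iff_eta cs htR, eta_mul]
          have h1 : eta cs x t = 1 := (isRightInversion_iff_eta cs htR).mp ((hA_iff t).mp htA)
          have h0 : eta cs u₀ (x * t * x⁻¹) = 0 := by
            rw [eta_eq_zero_iff cs hconjR]
            exact fun hinv => hdisj_aux t htA ((hB_iff t).mpr hinv)
          rw [h1, h0, add_zero]
        · have hinvu := (hB_iff t).mp htB
          have hconjR : cs.IsReflection (x * t * x⁻¹) := hinvu.1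
          have htR : cs.IsReflection t := by
            have h2 := hconjR.conj x⁻¹
            have hc : x⁻¹ * (x * t * x⁻¹) * x⁻¹⁻¹ = t := by group
            rwa [hc] at h2
          rw [isRightInversion_iff_eta cs htR, eta_mul]
          have h1 : eta cs u₀ (x * t * x⁻¹) = 1 :=
            (isRightInversion_iff_eta cs hconjR).mp hinvu
          have h0 : eta cs x t = 0 := by
            rw [eta_eq_zero_iff cs htR]
            intro hinvx
            exact hdisj_aux t ((hA_iff t).mpr hinvx) htB
          rw [h1, h0, zero_add]
    have hdisj : Disjoint A Bf := Finset.disjoint_left.mpr (fun {t} ht => hdisj_aux t ht)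
    have hinj : Function.Injective (fun t : W => x⁻¹ * t * x) := by
      intro a b hab
      simp only at hab
      have := congrArg (fun z => x * z * x⁻¹) hab
      simpa [mul_assoc] using this
    have hcards := congrArg Finset.card hset
    rw [Finset.card_union_of_disjoint hdisj] at hcards
    rw [card_ris_toFinset cs hred'] at hcards
    have hcA : A.card = ℓ x := by rw [hA, card_ris_toFinset cs hωxred, hωxeq]
    have hcB : Bf.card = ℓ u₀ := by
      rw [hB, Finset.card_image_of_injective _ hinj, card_ris_toFinset cs hred₀, ← h0eq]
    rw [hcA, hcB, ← heq'] at hcards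
    omega
  -- u itself is the minimal element
  have key : u = u₀ * x₀⁻¹ := by rw [hu₀]; group
  have hyK : x₀⁻¹ ∈ K := inv_mem hx₀K
  have hy1 : x₀⁻¹ = 1 := by
    by_contra hy
    obtain ⟨ρ, hρI, hρred, hρeq⟩ := exists_reduced_Iword cs I hyK
    have hρne : ρ ≠ [] := by
      rintro rfl
      apply hy
      rw [← hρeq, cs.wordProd_nil]
    obtain ⟨ρ', j, rfl⟩ := (List.eq_nil_or_concat' ρ).resolve_left hρne
    have hjI : j ∈ I := hρI j (by simp)
    have hysj : x₀⁻¹ * σ j = π ρ' := by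
      rw [← hρeq, cs.wordProd_append, cs.wordProd_singleton, mul_assoc,
        cs.simple_mul_simple_self, mul_one]
    have hρ'K : π ρ' ∈ K := wordProd_mem_closure cs I (fun k hk => hρI k (by simp [hk]))
    have e1 : ℓ (u * σ j) = ℓ u₀ + ℓ (π ρ') := by
      have hc : u * σ j = u₀ * (x₀⁻¹ * σ j) := by rw [key]; group
      rw [hc, hysj]
      exact h3b _ hρ'K
    have e2 : ℓ u = ℓ u₀ + ℓ x₀⁻¹ := by
      rw [key]
      exact h3b _ hyK
    have e3 : ℓ (π ρ') ≤ ρ'.length := cs.length_wordProd_le ρ'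
    have e4 : ℓ x₀⁻¹ = ρ'.length + 1 := by
      rw [← hρeq]
      have : ℓ (π (ρ' ++ [j])) = (ρ' ++ [j]).length := hρred
      rw [this]
      simp
    have e5 := hu j hjI
    omega
  have huu : u = u₀ := by rw [key, hy1, mul_one]
  intro x hxK
  rw [huu]
  exact h3b x hxK

end StrongExch







/-- The Bruhat order on a Coxeter group. -/
def bruhatLE {B W : Type*} [Group W] {M : CoxeterMatrix B} (cs : CoxeterSystem M W)
    (u v : W) : Prop :=
  ∃ ω : List B, cs.IsReduced ω ∧ cs.wordProd ω = v ∧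
    ∃ ω' : List B, ω'.Sublist ω ∧ cs.IsReduced ω' ∧ cs.wordProd ω' = u

/-- The standard parabolic subgroup generated by the simple reflections in `I`. -/
def parabolic {B W : Type*} [Group W] {M : CoxeterMatrix B} (cs : CoxeterSystem M W)
    (I : Set B) : Subgroup W :=
  Subgroup.closure (cs.simple '' I)

/-- The double coset `W_I w W_J`. -/
def doubleCoset {B W : Type*} [Group W] {M : CoxeterMatrix B} (cs : CoxeterSystem M W)
    (I J : Set B) (w : W) : Set W :=
  {x : W | ∃ a ∈ parabolic cs I, ∃ b ∈ parabolic cs J, x = a * w * b}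


/-- For a finite Coxeter group with longest element `w₀`: if `u ∈ W^I` and
`v ∈ W_{w₀Iw₀} w₀ W_I` then `u ≤_L v` in the left weak order. -/
theorem stmt11 {B W : Type*} [Group W] {M : CoxeterMatrix B} (cs : CoxeterSystem M W)
    (w₀ : W) (hw₀ : ∀ w : W, w ≠ w₀ → cs.length w < cs.length w₀)
    (I : Set B) (u v : W)
    (hu : ∀ s ∈ I, cs.length u < cs.length (u * cs.simple s))
    (hv : ∃ a ∈ Subgroup.closure ((fun g => w₀ * g * w₀) '' (cs.simple '' I)),
      ∃ b ∈ parabolic cs I, v = a * w₀ * b) :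
    ∃ c : W, v = c * u ∧ cs.length v = cs.length c + cs.length u := by
  classical
  have hww : w₀ * w₀ = 1 := StrongExch.w0_mul_self cs hw₀
  obtain ⟨a, ha, b, hb, hveq⟩ := hv
  have hb' : b ∈ Subgroup.closure (cs.simple '' I) := hb
  have ha2 : ∃ a' ∈ Subgroup.closure (cs.simple '' I), a = w₀ * a' * w₀ := by
    refine Subgroup.closure_induction ?_ ?_ ?_ ?_ ha
    · rintro g ⟨g', hg', rfl⟩
      exact ⟨g', Subgroup.subset_closure hg', rfl⟩
    · exact ⟨1, one_mem _, by rw [mul_one, hww]⟩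
    · rintro p q _ _ ⟨p', hp', rfl⟩ ⟨q', hq', rfl⟩
      refine ⟨p' * q', mul_mem hp' hq', ?_⟩
      calc w₀ * p' * w₀ * (w₀ * q' * w₀) = w₀ * p' * (w₀ * w₀) * q' * w₀ := by group
        _ = w₀ * (p' * q') * w₀ := by rw [hww]; group
    · rintro p _ ⟨p', hp', rfl⟩
      refine ⟨p'⁻¹, inv_mem hp', ?_⟩
      have hinv : w₀⁻¹ = w₀ := inv_eq_of_mul_eq_one_right hww
      rw [mul_inv_rev, mul_inv_rev, hinv]
      group
  obtain ⟨a', ha', haeq⟩ := ha2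
  set x := a' * b with hx
  have hxK : x ∈ Subgroup.closure (cs.simple '' I) := mul_mem ha' hb'
  have hveq2 : v = w₀ * x := by
    rw [hveq, haeq, hx]
    calc w₀ * a' * w₀ * w₀ * b = w₀ * a' * (w₀ * w₀) * b := by group
      _ = w₀ * (a' * b) := by rw [hww]; group
  refine ⟨w₀ * x * u⁻¹, by rw [hveq2]; group, ?_⟩
  have hF1a := StrongExch.length_w0_mul cs hw₀ x
  have hF1b := StrongExch.length_w0_mul cs hw₀ (x * u⁻¹)
  have hinvlen : cs.length (x * u⁻¹) = cs.length (u * x⁻¹) := by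
    have hmi : (x * u⁻¹)⁻¹ = u * x⁻¹ := by group
    rw [← hmi, cs.length_inv]
  have hF2 : cs.length (u * x⁻¹) = cs.length u + cs.length x⁻¹ :=
    StrongExch.length_mul_of_min cs hu x⁻¹ (inv_mem hxK)
  have hxinvlen : cs.length x⁻¹ = cs.length x := cs.length_inv x
  have hwcu : cs.length (w₀ * x * u⁻¹) = cs.length (w₀ * (x * u⁻¹)) := by rw [mul_assoc]
  rw [hveq2, hwcu]
  omega
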